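/- Let Γ be a finite simple graph not containing K_{2,3} or K_{2,3}⁺ as an induced subgraph, and suppose Λ ⊆ Γ is an induced subgraph containing L (three vertices, no edges) or L⁺ (three vertices, one edge) as an induced subgraph. Then Link(Λ) = ∩_{v∈Λ} Link(v) induces a complete subgraph (clique) of Γ. -/

import Mathlib

def racgRels {V : Type*} (G : SimpleGraph V) : Set (FreeGroup V) :=
  {r | (∃ v, r = FreeGroup.of v * FreeGroup.of v) ∨
    ∃ u v, G.Adj u v ∧ r = FreeGroup.of u * FreeGroup.of v * FreeGroup.of u * FreeGroup.of v}

abbrev RACG {V : Type*} (G : SimpleGraph V) : Type _ := PresentedGroup (racgRels G)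

def racgGen {V : Type*} (G : SimpleGraph V) (v : V) : RACG G := PresentedGroup.of v

def specialSubgroup {V : Type*} (G : SimpleGraph V) (S : Set V) : Subgroup (RACG G) :=
  Subgroup.closure (racgGen G '' S)

def linkSet {V : Type*} (G : SimpleGraph V) (S : Set V) : Set V :=
  {u | ∀ s ∈ S, G.Adj u s}

noncomputable def wordLength {V : Type*} (G : SimpleGraph V) (g : RACG G) : ℕ :=
  sInf {n | ∃ l : List V, l.length = n ∧ (l.map (racgGen G)).prod = g}

lemma racgGen_sq {V : Type*} (G : SimpleGraph V) (v : V) :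
    racgGen G v * racgGen G v = 1 := by
  have h : (QuotientGroup.mk (FreeGroup.of v * FreeGroup.of v) :
      PresentedGroup (racgRels G)) = 1 := by
    rw [QuotientGroup.eq_one_iff]
    exact Subgroup.subset_normalClosure (Or.inl ⟨v, rfl⟩)
  first
  | exact h
  | (simp only [racgGen, PresentedGroup.of, ← map_mul]; exact h)
  | simpa [racgGen, PresentedGroup.of, PresentedGroup.mk] using h

lemma racgGen_comm {V : Type*} (G : SimpleGraph V) {u v : V} (h : G.Adj u v) :
    racgGen G u * racgGen G v * racgGen G u * racgGen G v = 1 := by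
  have h' : (QuotientGroup.mk (FreeGroup.of u * FreeGroup.of v * FreeGroup.of u * FreeGroup.of v) :
      PresentedGroup (racgRels G)) = 1 := by
    rw [QuotientGroup.eq_one_iff]
    exact Subgroup.subset_normalClosure (Or.inr ⟨u, v, h, rfl⟩)
  first
  | exact h'
  | (simp only [racgGen, PresentedGroup.of, ← map_mul]; exact h')
  | simpa [racgGen, PresentedGroup.of, PresentedGroup.mk] using h'

/-- The complete bipartite graph `K_{2,3}` with parts `Fin 2` and `Fin 3`. -/
def K23 : SimpleGraph (Fin 2 ⊕ Fin 3) where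
  Adj x y := (x.isLeft ∧ y.isRight) ∨ (x.isRight ∧ y.isLeft)
  symm := ⟨by intro x y; revert x y; decide⟩
  loopless := ⟨by intro x; revert x; decide⟩

/-- `K_{2,3}⁺`: the graph `K_{2,3}` with one extra edge joining `b₁ = inr 0` and
`b₂ = inr 1` in the size-3 part. -/
def K23plus : SimpleGraph (Fin 2 ⊕ Fin 3) where
  Adj x y := (x.isLeft ∧ y.isRight) ∨ (x.isRight ∧ y.isLeft) ∨
    (x = Sum.inr 0 ∧ y = Sum.inr 1) ∨ (x = Sum.inr 1 ∧ y = Sum.inr 0)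
  symm := ⟨by intro x y; revert x y; decide⟩
  loopless := ⟨by intro x; revert x; decide⟩

/-- `G` contains `Hg` as an induced subgraph. -/
def ContainsInduced {α V : Type*} (Hg : SimpleGraph α) (G : SimpleGraph V) : Prop :=
  ∃ f : α → V, Function.Injective f ∧ ∀ a b, G.Adj (f a) (f b) ↔ Hg.Adj a b

/-- The group of order two, written multiplicatively. -/
abbrev Z2 : Type := Multiplicative (ZMod 2)

/-- If `Γ` contains neither `K_{2,3}` nor `K_{2,3}⁺` as an induced subgraph and
`Λ ⊆ Γ` contains `L` or `L⁺` as an induced subgraph, then `Link(Λ)` is a clique. -/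
theorem link_is_clique_of_no_K23
    {V : Type*} [Fintype V] (G : SimpleGraph V)
    (hK : ¬ ContainsInduced K23 G) (hKplus : ¬ ContainsInduced K23plus G)
    (Λ : Set V)
    (hL : ∃ u ∈ Λ, ∃ v ∈ Λ, ∃ w ∈ Λ, u ≠ v ∧ u ≠ w ∧ v ≠ w ∧
      ((¬G.Adj u v ∧ ¬G.Adj u w ∧ ¬G.Adj v w) ∨
       (G.Adj u v ∧ ¬G.Adj u w ∧ ¬G.Adj v w))) :
    ∀ x ∈ linkSet G Λ, ∀ y ∈ linkSet G Λ, x ≠ y → G.Adj x y := by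
  intro x hx y hy hxy
  by_contra hadj
  obtain ⟨u, hu, v, hv, w, hw, huv, huw, hvw, hcase⟩ := hL
  have hxu := hx u hu; have hxv := hx v hv; have hxw := hx w hw
  have hyu := hy u hu; have hyv := hy v hv; have hyw := hy w hw
  have hnxu := G.ne_of_adj hxu; have hnxv := G.ne_of_adj hxv
  have hnxw := G.ne_of_adj hxw
  have hnyu := G.ne_of_adj hyu; have hnyv := G.ne_of_adj hyv
  have hnyw := G.ne_of_adj hyw
  set f : Fin 2 ⊕ Fin 3 → V := Sum.elim ![x, y] ![u, v, w] with hfdef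
  have hinj : Function.Injective f := by
    intro a b hab
    rcases a with a | a <;> rcases b with b | b <;>
      fin_cases a <;> fin_cases b <;> simp_all [f]
  rcases hcase with ⟨h1, h2, h3⟩ | ⟨h1, h2, h3⟩
  · exact hK ⟨f, hinj, by
      intro a b
      rcases a with a | a <;> rcases b with b | b <;>
        fin_cases a <;> fin_cases b <;>
        simp_all [f, K23, G.adj_comm x y, G.adj_comm x u, G.adj_comm x v,
          G.adj_comm x w, G.adj_comm y u, G.adj_comm y v, G.adj_comm y w,
          G.adj_comm u v, G.adj_comm u w, G.adj_comm v w]⟩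
  · exact hKplus ⟨f, hinj, by
      intro a b
      rcases a with a | a <;> rcases b with b | b <;>
        fin_cases a <;> fin_cases b <;>
        simp_all [f, K23plus, G.adj_comm x y, G.adj_comm x u, G.adj_comm x v,
          G.adj_comm x w, G.adj_comm y u, G.adj_comm y v, G.adj_comm y w,
          G.adj_comm u v, G.adj_comm u w, G.adj_comm v w]⟩
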